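/- (Policies are determined by their weighted occupancy measures.) In the finite MDP setting, let φ : ℕ → ℝ be a summable sequence with φ_t > 0 for all t, and for a policy π define the φ-weighted occupancy measure Φ_π((s,a)|s₀) = ∑_t φ_t · P^t_π((s,a)|s₀). Then: (i) for every policy π and all s₀, s, a: Φ_π((s,a)|s₀) = π s a · ∑_{a'} Φ_π((s,a')|s₀); (ii) if two policies π₁, π₂ satisfy Φ_{π₁}((s,a)|s₀) = Φ_{π₂}((s,a)|s₀) for all s₀, s, a, then π₁ s a = π₂ s a for all s, a. -/
import Mathlib


open scoped BigOperators Classical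

/-- `n`-step state–action distribution of the stationary policy `π` started at a state. -/
noncomputable def PstepS {S A : Type*} [Fintype S] [Fintype A]
    (P : S × A → PMF S) (π : S → PMF A) : ℕ → S → S × A → ℝ
  | 0, s₀, x => if x.1 = s₀ then (π x.1 x.2).toReal else 0
  | n + 1, s₀, x => ∑ y : S × A, PstepS P π n s₀ y * (P y x.1).toReal * (π x.1 x.2).toReal

/-- `n`-step state–action distribution of `π` started at a state–action pair. -/
noncomputable def PstepSA {S A : Type*} [Fintype S] [Fintype A]
    (P : S × A → PMF S) (π : S → PMF A) : ℕ → S × A → S × A → ℝ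
  | 0, y, x => if x = y then 1 else 0
  | n + 1, y, x => ∑ z : S × A, PstepSA P π n y z * (P z x.1).toReal * (π x.1 x.2).toReal

/-- η-weighted future state distribution, started at a state. -/
noncomputable def PetaS {S A : Type*} [Fintype S] [Fintype A]
    (P : S × A → PMF S) (π : S → PMF A) (η : ℕ → ℝ) (s₀ : S) (x : S × A) : ℝ :=
  ∑' k, η k * PstepS P π k s₀ x

/-- η-weighted future state distribution, started at a state–action pair. -/
noncomputable def PetaSA {S A : Type*} [Fintype S] [Fintype A]
    (P : S × A → PMF S) (π : S → PMF A) (η : ℕ → ℝ) (y : S × A) (x : S × A) : ℝ :=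
  ∑' k, η k * PstepSA P π k y x

/-- γ-discounted occupancy measure, started at a state. -/
noncomputable def rhoS {S A : Type*} [Fintype S] [Fintype A]
    (P : S × A → PMF S) (π : S → PMF A) (γ : ℝ) (s₀ : S) (x : S × A) : ℝ :=
  ∑' t, γ ^ t * PstepS P π t s₀ x

/-- γ-discounted occupancy measure, started at a state–action pair. -/
noncomputable def rhoSA {S A : Type*} [Fintype S] [Fintype A]
    (P : S × A → PMF S) (π : S → PMF A) (γ : ℝ) (y : S × A) (x : S × A) : ℝ :=
  ∑' t, γ ^ t * PstepSA P π t y x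

/-- η-weighted, γ-discounted future occupancy measure `μ_π`. -/
noncomputable def muS {S A : Type*} [Fintype S] [Fintype A]
    (P : S × A → PMF S) (π : S → PMF A) (γ : ℝ) (η : ℕ → ℝ) (s₀ : S) (x : S × A) : ℝ :=
  ∑' t, ∑' k, γ ^ t * η k * PstepS P π (t + k) s₀ x

/-- φ-weighted occupancy measure. -/
noncomputable def PhiOcc {S A : Type*} [Fintype S] [Fintype A]
    (P : S × A → PMF S) (π : S → PMF A) (φ : ℕ → ℝ) (s₀ : S) (x : S × A) : ℝ :=
  ∑' t, φ t * PstepS P π t s₀ x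

section
variable {S A : Type*} [Fintype S] [Fintype A] (P : S × A → PMF S) (π : S → PMF A)

lemma pmf_sum_toReal {B : Type*} [Fintype B] (p : PMF B) : ∑ b : B, (p b).toReal = 1 := by
  have h := p.tsum_coe
  rw [tsum_fintype] at h
  rw [← ENNReal.toReal_sum (fun b _ => PMF.apply_ne_top p b), h, ENNReal.toReal_one]

lemma pstep_nonneg (t : ℕ) (s₀ : S) (x : S × A) : 0 ≤ PstepS P π t s₀ x := by
  induction t generalizing x with
  | zero => simp only [PstepS]; split <;> positivity
  | succ n ih =>
    simp only [PstepS]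
    exact Finset.sum_nonneg fun y _ => by
      have := ih y
      positivity

lemma pstep_sum (t : ℕ) (s₀ : S) : ∑ x : S × A, PstepS P π t s₀ x = 1 := by
  induction t with
  | zero =>
    rw [Fintype.sum_prod_type]
    simp only [PstepS]
    rw [Finset.sum_eq_single s₀]
    · simp [pmf_sum_toReal]
    · intro b _ hb
      simp [hb]
    · simp
  | succ n ih =>
    simp only [PstepS]
    rw [Finset.sum_comm]
    have : ∀ y : S × A, ∑ x : S × A, PstepS P π n s₀ y * (P y x.1).toReal * (π x.1 x.2).toReal
        = PstepS P π n s₀ y := by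
      intro y
      rw [Fintype.sum_prod_type]
      have : ∀ s : S, ∑ a : A, PstepS P π n s₀ y * (P y s).toReal * (π s a).toReal
          = PstepS P π n s₀ y * (P y s).toReal := by
        intro s
        rw [← Finset.mul_sum, pmf_sum_toReal, mul_one]
      simp only [this]
      rw [← Finset.mul_sum, pmf_sum_toReal, mul_one]
    simp only [this]
    exact ih

lemma pstep_le_one (t : ℕ) (s₀ : S) (x : S × A) : PstepS P π t s₀ x ≤ 1 := by
  rw [← pstep_sum P π t s₀]
  exact Finset.single_le_sum (fun y _ => pstep_nonneg P π t s₀ y) (Finset.mem_univ x)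

lemma pstep_factor (t : ℕ) (s₀ s : S) (a : A) :
    PstepS P π t s₀ (s, a) = (π s a).toReal * ∑ a' : A, PstepS P π t s₀ (s, a') := by
  cases t with
  | zero =>
    by_cases h : s = s₀ <;> simp [PstepS, h, pmf_sum_toReal]
  | succ n =>
    simp only [PstepS]
    rw [Finset.sum_comm]
    have : ∀ y : S × A, ∑ a' : A, PstepS P π n s₀ y * (P y s).toReal * (π s a').toReal
        = PstepS P π n s₀ y * (P y s).toReal := by
      intro y; rw [← Finset.mul_sum, pmf_sum_toReal, mul_one]
    simp only [this]
    rw [Finset.mul_sum]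
    exact Finset.sum_congr rfl fun y _ => by ring

lemma phi_summable (φ : ℕ → ℝ) (hφs : Summable φ) (hφ : ∀ t, 0 < φ t) (s₀ : S) (x : S × A) : Summable (fun t => φ t * PstepS P π t s₀ x) := by
  refine Summable.of_nonneg_of_le
    (fun t => mul_nonneg (hφ t).le (pstep_nonneg P π t s₀ x))
    (fun t => ?_) hφs
  exact mul_le_of_le_one_right (hφ t).le (pstep_le_one P π t s₀ x)
end

theorem stmt4 {S A : Type*} [Fintype S] [Fintype A] [Nonempty S] [Nonempty A]
    (P : S × A → PMF S) (φ : ℕ → ℝ) (hφs : Summable φ) (hφ : ∀ t, 0 < φ t) :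
    -- (i) the occupancy measure disintegrates through the policy
    (∀ (π : S → PMF A) (s₀ s : S) (a : A),
      PhiOcc P π φ s₀ (s, a) = (π s a).toReal * ∑ a' : A, PhiOcc P π φ s₀ (s, a')) ∧
    -- (ii) the occupancy measure determines the policy
    (∀ π₁ π₂ : S → PMF A,
      (∀ (s₀ s : S) (a : A), PhiOcc P π₁ φ s₀ (s, a) = PhiOcc P π₂ φ s₀ (s, a)) →
      ∀ (s : S) (a : A), π₁ s a = π₂ s a) := by
  have key : ∀ (π : S → PMF A) (s₀ s : S) (a : A),
      PhiOcc P π φ s₀ (s, a) = (π s a).toReal * ∑ a' : A, PhiOcc P π φ s₀ (s, a') := by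
    intro π s₀ s a
    have hswap : ∑ a' : A, PhiOcc P π φ s₀ (s, a')
        = ∑' t, φ t * ∑ a' : A, PstepS P π t s₀ (s, a') := by
      unfold PhiOcc
      rw [← Summable.tsum_finsetSum (fun a' _ => phi_summable P π φ hφs hφ s₀ (s, a'))]
      exact tsum_congr fun t => by rw [Finset.mul_sum]
    rw [hswap]
    unfold PhiOcc
    rw [← tsum_mul_left]
    exact tsum_congr fun t => by rw [pstep_factor]; ring
  refine ⟨key, ?_⟩
  intro π₁ π₂ h s a
  have hC : ∑ a' : A, PhiOcc P π₁ φ s (s, a') = ∑ a' : A, PhiOcc P π₂ φ s (s, a') :=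
    Finset.sum_congr rfl fun a' _ => h s s a'
  have hpos : 0 < ∑ a' : A, PhiOcc P π₁ φ s (s, a') := by
    have hge : ∀ a' : A, φ 0 * PstepS P π₁ 0 s (s, a') ≤ PhiOcc P π₁ φ s (s, a') :=
      fun a' => Summable.le_tsum (phi_summable P π₁ φ hφs hφ s (s, a')) 0
        (fun t _ => mul_nonneg (hφ t).le (pstep_nonneg P π₁ t s (s, a')))
    have h0 : ∑ a' : A, PstepS P π₁ 0 s (s, a') = 1 := by
      simp [PstepS, pmf_sum_toReal]
    have hle : φ 0 * 1 ≤ ∑ a' : A, PhiOcc P π₁ φ s (s, a') := by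
      calc φ 0 * 1 = ∑ a' : A, φ 0 * PstepS P π₁ 0 s (s, a') := by
            rw [← Finset.mul_sum, h0]
        _ ≤ _ := Finset.sum_le_sum fun a' _ => hge a'
    linarith [hφ 0]
  have heq : (π₁ s a).toReal = (π₂ s a).toReal := by
    have h1 := key π₁ s s a
    have h2 := key π₂ s s a
    rw [h s s a, hC] at h1
    rw [h1] at h2
    rw [hC] at hpos
    exact mul_right_cancel₀ hpos.ne' h2
  exact (ENNReal.toReal_eq_toReal_iff' (PMF.apply_ne_top _ _) (PMF.apply_ne_top _ _)).mp heq
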